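/- There exists a constant C > 0 (depending only on r) such that for every ε > 0 and every nonzero polynomial P ∈ ℂ[z] of degree d ≥ 1, the Lebesgue measure (area) of the set { z ∈ Δ_r : |P(z)| ≤ ε · sup_{|w|≤r} |P(w)| } is at most C · d · ε^{2/d}. -/

import Mathlib

open MeasureTheory Metric

/-- The sup of `|P(z)|` over the closed disk of radius `r`. -/
noncomputable def supAbsPoly (P : Polynomial ℂ) (r : ℝ) : ℝ :=
  ⨆ z : closedBall (0 : ℂ) r, ‖P.eval z.1‖

/-- Area estimate: the set of points of the disk of radius `r` where a degree-`d`
polynomial is at most `ε` times its sup norm has area at most `C·d·ε^{2/d}`. -/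
theorem area_of_small_values_poly (r : ℝ) (hr : 0 < r) :
    ∃ C > (0 : ℝ), ∀ ε : ℝ, 0 < ε → ∀ P : Polynomial ℂ, P ≠ 0 → 1 ≤ P.natDegree →
      volume {z : ℂ | ‖z‖ < r ∧
          ‖P.eval z‖ ≤ ε * supAbsPoly P r}
        ≤ ENNReal.ofReal (C * P.natDegree * ε ^ ((2 : ℝ) / P.natDegree)) := by
  refine ⟨9 * Real.pi * r ^ 2, by positivity, ?_⟩
  intro ε hε P hP hd
  set d := P.natDegree with hdd
  have hd0 : (d : ℝ) ≠ 0 := by positivity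
  set t : ℝ := ε ^ ((1 : ℝ) / d) with ht
  have ht0 : 0 < t := Real.rpow_pos_of_pos hε _
  have htd : t ^ d = ε := by
    rw [ht, ← Real.rpow_natCast (ε ^ ((1:ℝ)/d)) d, ← Real.rpow_mul hε.le,
      one_div, inv_mul_cancel₀ hd0, Real.rpow_one]
  have ht2 : t ^ 2 = ε ^ ((2 : ℝ) / d) := by
    rw [ht, ← Real.rpow_natCast (ε ^ ((1:ℝ)/d)) 2, ← Real.rpow_mul hε.le]
    congr 1
    ring
  have hsplits : P.Splits := IsAlgClosed.splits P
  have hcard : P.roots.card = d := (Polynomial.splits_iff_card_roots.mp hsplits)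
  set l : List ℂ := P.roots.toList with hl
  have hlen : l.length = d := by rw [hl, Multiset.length_toList, hcard]
  have hlc : (0:ℝ) < ‖P.leadingCoeff‖ := by
    simpa using Polynomial.leadingCoeff_ne_zero.mpr hP
  -- evaluation formula
  have heval : ∀ z : ℂ, ‖P.eval z‖
      = ‖P.leadingCoeff‖ * ∏ i : Fin l.length, ‖z - l[i.1]‖ := by
    intro z
    conv_lhs => rw [hsplits.eq_prod_roots]
    rw [Polynomial.eval_mul, Polynomial.eval_C, norm_mul]
    congr 1
    rw [Polynomial.eval_multiset_prod, Multiset.map_map]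
    simp only [Function.comp_def, Polynomial.eval_sub, Polynomial.eval_X, Polynomial.eval_C]
    rw [show ‖(Multiset.map (fun x => z - x) P.roots).prod‖
      = (normHom : ℂ →*₀ ℝ) (Multiset.map (fun x => z - x) P.roots).prod from rfl,
      map_multiset_prod (normHom : ℂ →*₀ ℝ), Multiset.map_map]
    conv_lhs => rw [show P.roots = (l : Multiset ℂ) from (Multiset.coe_toList _).symm]
    rw [Multiset.map_coe, Multiset.prod_coe,
      ← Fin.prod_univ_fun_getElem l (⇑(normHom : ℂ →*₀ ℝ) ∘ fun x => z - x)]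
    rfl
  -- upper bound for the sup norm
  have hM : supAbsPoly P r
      ≤ ‖P.leadingCoeff‖ * ∏ i : Fin l.length, (r + ‖l[i.1]‖) := by
    haveI : Nonempty (closedBall (0:ℂ) r) := ⟨⟨0, mem_closedBall_self hr.le⟩⟩
    refine ciSup_le fun z => ?_
    rw [heval]
    refine mul_le_mul_of_nonneg_left (Finset.prod_le_prod (fun i _ => by positivity)
      (fun i _ => ?_)) hlc.le
    have hz : ‖z.1‖ ≤ r := by
      have h := mem_closedBall.mp z.2
      rwa [Complex.dist_eq, sub_zero] at h
    calc ‖z.1 - l[i.1]‖ ≤ ‖z.1‖ + ‖l[i.1]‖ := by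
          simpa using norm_sub_le z.1 l[i.1]
      _ ≤ r + ‖l[i.1]‖ := by linarith
  -- covering by balls around roots
  have hsub : {z : ℂ | ‖z‖ < r ∧ ‖P.eval z‖ ≤ ε * supAbsPoly P r}
      ⊆ ⋃ i : Fin l.length,
        (ball (0:ℂ) r ∩ closedBall l[i.1] (t * (r + ‖l[i.1]‖))) := by
    rintro z ⟨hz1, hz2⟩
    have h1 : ‖P.leadingCoeff‖ * ∏ i : Fin l.length, ‖z - l[i.1]‖
        ≤ ‖P.leadingCoeff‖
          * (ε * ∏ i : Fin l.length, (r + ‖l[i.1]‖)) := by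
      rw [← heval]
      calc ‖P.eval z‖ ≤ ε * supAbsPoly P r := hz2
        _ ≤ ε * (‖P.leadingCoeff‖ * ∏ i : Fin l.length, (r + ‖l[i.1]‖)) :=
            mul_le_mul_of_nonneg_left hM hε.le
        _ = _ := by ring
    have h2 : ∏ i : Fin l.length, ‖z - l[i.1]‖
        ≤ ε * ∏ i : Fin l.length, (r + ‖l[i.1]‖) :=
      le_of_mul_le_mul_left h1 hlc
    by_contra hcon
    have hstrict : ∏ i : Fin l.length, (t * (r + ‖l[i.1]‖))
        < ∏ i : Fin l.length, ‖z - l[i.1]‖ := by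
      haveI : NeZero l.length := ⟨by omega⟩
      refine Finset.prod_lt_prod_of_nonempty (fun i _ => by positivity)
        (fun i _ => ?_) Finset.univ_nonempty
      by_contra hle
      push_neg at hle
      exact hcon (Set.mem_iUnion.mpr ⟨i, ⟨by rwa [mem_ball, Complex.dist_eq, sub_zero],
        by rwa [mem_closedBall, Complex.dist_eq]⟩⟩)
    rw [Finset.prod_mul_distrib, Finset.prod_const, Finset.card_univ, Fintype.card_fin,
      show t ^ l.length = ε from by rw [hlen]; exact htd] at hstrict
    exact absurd h2 (not_le.mpr hstrict)
  -- volume bound for each ball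
  have hball : ∀ i : Fin l.length,
      volume (ball (0:ℂ) r ∩ closedBall l[i.1] (t * (r + ‖l[i.1]‖)))
        ≤ ENNReal.ofReal (9 * Real.pi * r ^ 2 * ε ^ ((2:ℝ)/d)) := by
    intro i
    set w : ℂ := l[i.1] with hw
    set ρ : ℝ := t * (r + ‖w‖) with hρ
    rw [← ht2]
    by_cases hwr : ‖w‖ ≤ 2 * r
    · calc volume (ball (0:ℂ) r ∩ closedBall w ρ)
          ≤ volume (closedBall w ρ) := measure_mono Set.inter_subset_right
        _ = ENNReal.ofReal ρ ^ 2 * NNReal.pi := Complex.volume_closedBall w ρ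
        _ = ENNReal.ofReal (Real.pi * ρ ^ 2) := by
            rw [← ENNReal.ofReal_pow (by positivity), ← ENNReal.ofReal_coe_nnreal,
              ← ENNReal.ofReal_mul (by positivity), NNReal.coe_real_pi, mul_comm]
        _ ≤ ENNReal.ofReal (9 * Real.pi * r ^ 2 * t ^ 2) := by
            refine ENNReal.ofReal_le_ofReal ?_
            have habs0 : (0:ℝ) ≤ ‖w‖ := norm_nonneg w
            have hρ0 : 0 ≤ ρ := mul_nonneg ht0.le (by linarith)
            have hρ3 : ρ ≤ t * (3 * r) := by
              rw [hρ]
              nlinarith [ht0.le]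
            have hsq : ρ ^ 2 ≤ 9 * r ^ 2 * t ^ 2 := by nlinarith
            nlinarith [Real.pi_pos]
    · by_cases hne : (ball (0:ℂ) r ∩ closedBall w ρ).Nonempty
      · obtain ⟨z, hz1, hz2⟩ := hne
        rw [mem_ball, Complex.dist_eq, sub_zero] at hz1
        rw [mem_closedBall, Complex.dist_eq] at hz2
        have habs : ‖w‖ - ‖z‖ ≤ ρ := by
          have h1 : ‖w‖ ≤ ‖z‖ + ‖w - z‖ := by
            simpa using norm_add_le z (w - z)
          have h2' : ‖w - z‖ = ‖z - w‖ := norm_sub_rev w z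
          linarith
        have h13 : (1:ℝ)/3 ≤ t := by
          have hwpos : (0:ℝ) < r + ‖w‖ := by positivity
          rw [hρ] at habs
          rw [div_le_iff₀ (by norm_num)]
          nlinarith
        calc volume (ball (0:ℂ) r ∩ closedBall w ρ)
            ≤ volume (ball (0:ℂ) r) := measure_mono Set.inter_subset_left
          _ = ENNReal.ofReal r ^ 2 * NNReal.pi := Complex.volume_ball 0 r
          _ = ENNReal.ofReal (Real.pi * r ^ 2) := by
              rw [← ENNReal.ofReal_pow hr.le, ← ENNReal.ofReal_coe_nnreal,
                ← ENNReal.ofReal_mul (by positivity), NNReal.coe_real_pi, mul_comm]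
          _ ≤ ENNReal.ofReal (9 * Real.pi * r ^ 2 * t ^ 2) := by
              refine ENNReal.ofReal_le_ofReal ?_
              nlinarith [mul_nonneg (mul_nonneg (by linarith : (0:ℝ) ≤ 3*t-1)
                (by linarith : (0:ℝ) ≤ 3*t+1)) (mul_nonneg Real.pi_pos.le (sq_nonneg r))]
      · rw [Set.not_nonempty_iff_eq_empty.mp hne]
        simp
  calc volume {z : ℂ | ‖z‖ < r ∧ ‖P.eval z‖ ≤ ε * supAbsPoly P r}
      ≤ volume (⋃ i : Fin l.length,
          (ball (0:ℂ) r ∩ closedBall l[i.1] (t * (r + ‖l[i.1]‖)))) :=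
        measure_mono hsub
    _ ≤ ∑' i : Fin l.length,
          volume (ball (0:ℂ) r ∩ closedBall l[i.1] (t * (r + ‖l[i.1]‖))) :=
        measure_iUnion_le _
    _ = ∑ i : Fin l.length,
          volume (ball (0:ℂ) r ∩ closedBall l[i.1] (t * (r + ‖l[i.1]‖))) :=
        tsum_fintype _
    _ ≤ ∑ _i : Fin l.length, ENNReal.ofReal (9 * Real.pi * r ^ 2 * ε ^ ((2:ℝ)/d)) :=
        Finset.sum_le_sum (fun i _ => hball i)
    _ = ENNReal.ofReal (9 * Real.pi * r ^ 2 * d * ε ^ ((2:ℝ)/d)) := by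
        rw [Finset.sum_const, Finset.card_univ, Fintype.card_fin, hlen, nsmul_eq_mul,
          ← ENNReal.ofReal_natCast d, ← ENNReal.ofReal_mul (by positivity)]
        congr 1
        ring
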